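/- For every graph G and any maximum critical independent set I of G, core(G) = core(G[L^c(G)]) ∪ M(N(I) \ corona(G)) ∪ ker(G), for every maximum matching M of G[L(G)]. -/

import Mathlib

open Finset

variable {V : Type*} [Fintype V] [DecidableEq V] (G : SimpleGraph V) [DecidableRel G.Adj]

/-- `N(S)`: the set of vertices adjacent to some vertex of `S`. -/
def nbhd (S : Finset V) : Finset V := S.biUnion (fun v => G.neighborFinset v)

/-- `S` is an independent set of `G`. -/
def Indep (S : Finset V) : Prop := ∀ u ∈ S, ∀ v ∈ S, ¬ G.Adj u v

/-- The difference `d_G(S) = |S| - |N(S)|`. -/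
def diffI (S : Finset V) : ℤ := (S.card : ℤ) - ((nbhd G S).card : ℤ)

/-- `S` is a maximum independent set of `G`. -/
def IsMaxIndep (S : Finset V) : Prop :=
  Indep G S ∧ ∀ T : Finset V, Indep G T → T.card ≤ S.card

/-- `I` is a critical independent set of `G`. -/
def IsCritIndep (I : Finset V) : Prop :=
  Indep G I ∧ ∀ J : Finset V, Indep G J → diffI G J ≤ diffI G I

/-- `I` is a maximum critical independent set of `G`. -/
def IsMaxCritIndep (I : Finset V) : Prop :=
  IsCritIndep G I ∧ ∀ J : Finset V, IsCritIndep G J → J.card ≤ I.card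

/-- `core(G)`: intersection of all maximum independent sets. -/
def core : Set V := {v | ∀ S : Finset V, IsMaxIndep G S → v ∈ S}

/-- `corona(G)`: union of all maximum independent sets. -/
def corona : Set V := {v | ∃ S : Finset V, IsMaxIndep G S ∧ v ∈ S}

/-- `nucleus(G)`: intersection of all maximum critical independent sets. -/
def nucleus : Set V := {v | ∀ S : Finset V, IsMaxCritIndep G S → v ∈ S}

/-- `diadem(G)`: union of all maximum critical independent sets. -/
def diadem : Set V := {v | ∃ S : Finset V, IsMaxCritIndep G S ∧ v ∈ S}

/-- `ker(G)`: intersection of all critical independent sets. -/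
def kerS : Set V := {v | ∀ S : Finset V, IsCritIndep G S → v ∈ S}

/-- A matching of `G`, given as an involution of the vertex set:
unmatched vertices are fixed points, matched vertices are sent to their partner. -/
def IsMatching (M : V → V) : Prop :=
  Function.Involutive M ∧ ∀ v, M v ≠ v → G.Adj v (M v)

/-- Twice the number of edges of the matching `M`, i.e. the number of matched vertices. -/
def matchSize (M : V → V) : ℕ := (univ.filter fun v => M v ≠ v).card

/-- `M` is a maximum matching of `G`. -/
def IsMaxMatching (M : V → V) : Prop :=
  IsMatching G M ∧ ∀ M' : V → V, IsMatching G M' → matchSize M' ≤ matchSize M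

/-- `M` is a matching of the induced subgraph `G[L]`. -/
def IsMatchingOn (L : Finset V) (M : V → V) : Prop :=
  IsMatching G M ∧ ∀ v, M v ≠ v → v ∈ L

/-- `M` is a maximum matching of the induced subgraph `G[L]`. -/
def IsMaxMatchingOn (L : Finset V) (M : V → V) : Prop :=
  IsMatchingOn G L M ∧ ∀ M' : V → V, IsMatchingOn G L M' → matchSize M' ≤ matchSize M

/-- `S` is a maximum independent set of the induced subgraph `G[L]`. -/
def IsMaxIndepOn (L : Finset V) (S : Finset V) : Prop :=
  S ⊆ L ∧ Indep G S ∧ ∀ T : Finset V, T ⊆ L → Indep G T → T.card ≤ S.card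

/-- `core` of the induced subgraph `G[L]`. -/
def coreOn (L : Finset V) : Set V := {v | ∀ S : Finset V, IsMaxIndepOn G L S → v ∈ S}

/-- `D(G[L])`: vertices of `L` missed by some maximum matching of `G[L]`. -/
def Dset (L : Finset V) : Set V := {v | v ∈ L ∧ ∃ M : V → V, IsMaxMatchingOn G L M ∧ M v = v}

/-- The Larson boundary `∂_L(G)` of the set `L`. -/
def boundaryL (L : Finset V) : Set V := {v | v ∈ L ∧ ∃ w, w ∉ L ∧ G.Adj v w}

/-- The critical difference `d(G)`. -/
noncomputable def critDiff : ℤ := sSup {d : ℤ | ∃ X : Finset V, diffI G X = d}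

/-- The difference of `S` computed in the induced subgraph `G[L]`. -/
def diffOn (L : Finset V) (S : Finset V) : ℤ := (S.card : ℤ) - ((nbhd G S ∩ L).card : ℤ)

/-- The critical difference of the induced subgraph `G[L]`. -/
noncomputable def critDiffOn (L : Finset V) : ℤ := sSup {d : ℤ | ∃ X : Finset V, X ⊆ L ∧ diffOn G L X = d}

/-- `G` is a König–Egerváry graph: `α(G) + μ(G) = |V(G)|`. -/
def KonigEgervary : Prop :=
  ∃ (S : Finset V) (M : V → V), IsMaxIndep G S ∧ IsMaxMatching G M ∧
    2 * S.card + matchSize M = 2 * Fintype.card V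
section Aux
variable {V : Type*} [Fintype V] [DecidableEq V] {G : SimpleGraph V} [DecidableRel G.Adj]

lemma mem_nbhd {S : Finset V} {v : V} : v ∈ nbhd G S ↔ ∃ u ∈ S, G.Adj u v := by
  simp [nbhd]

lemma Indep.subs {S T : Finset V} (h : Indep G S) (hTS : T ⊆ S) : Indep G T :=
  fun u hu v hv => h u (hTS hu) v (hTS hv)

lemma nbhd_mono {S T : Finset V} (h : S ⊆ T) : nbhd G S ⊆ nbhd G T := by
  intro v hv
  rw [mem_nbhd] at hv ⊢
  obtain ⟨u, hu, ha⟩ := hv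
  exact ⟨u, h hu, ha⟩

lemma nbhd_union {S T : Finset V} : nbhd G (S ∪ T) = nbhd G S ∪ nbhd G T := by
  ext v
  simp only [mem_nbhd, Finset.mem_union]
  constructor
  · rintro ⟨u, hu | hu, ha⟩
    · exact Or.inl ⟨u, hu, ha⟩
    · exact Or.inr ⟨u, hu, ha⟩
  · rintro (⟨u, hu, ha⟩ | ⟨u, hu, ha⟩)
    · exact ⟨u, Or.inl hu, ha⟩
    · exact ⟨u, Or.inr hu, ha⟩

lemma not_mem_nbhd_self {S : Finset V} (h : Indep G S) {v : V} (hv : v ∈ S) :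
    v ∉ nbhd G S := by
  rw [mem_nbhd]
  rintro ⟨u, hu, ha⟩
  exact h u hu v hv ha

lemma indep_sdiff_nbhd (X : Finset V) : Indep G (X \ nbhd G X) := by
  intro u hu v hv ha
  simp only [Finset.mem_sdiff] at hu hv
  exact hv.2 (mem_nbhd.2 ⟨u, hu.1, ha⟩)

lemma diffI_le_sdiff (X : Finset V) : diffI G X ≤ diffI G (X \ nbhd G X) := by
  have h2 : nbhd G (X \ nbhd G X) ⊆ nbhd G X \ (X ∩ nbhd G X) := by
    intro y hy
    rw [mem_nbhd] at hy
    obtain ⟨u, hu, ha⟩ := hy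
    rw [Finset.mem_sdiff] at hu
    refine Finset.mem_sdiff.2 ⟨mem_nbhd.2 ⟨u, hu.1, ha⟩, fun hyX => ?_⟩
    exact hu.2 (mem_nbhd.2 ⟨y, (Finset.mem_inter.1 hyX).1, ha.symm⟩)
  have h3 := Finset.card_le_card h2
  rw [Finset.card_sdiff_of_subset (Finset.inter_subset_right)] at h3
  have h4 : (X ∩ nbhd G X).card ≤ (nbhd G X).card := Finset.card_le_card Finset.inter_subset_right
  have h5 : (X \ nbhd G X).card + (X ∩ nbhd G X).card = X.card :=
    Finset.card_sdiff_add_card_inter X (nbhd G X)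
  unfold diffI
  omega

lemma diffI_le_crit {J : Finset V} (hJ : IsCritIndep G J) (X : Finset V) :
    diffI G X ≤ diffI G J :=
  le_trans (diffI_le_sdiff X) (hJ.2 _ (indep_sdiff_nbhd X))

lemma exists_maxIndep : ∃ S : Finset V, IsMaxIndep G S := by
  classical
  obtain ⟨S, hS, hmax⟩ := Finset.exists_max_image
    (Finset.univ.filter fun S : Finset V => Indep G S) Finset.card
    ⟨∅, Finset.mem_filter.2 ⟨Finset.mem_univ _, by simp [Indep]⟩⟩
  exact ⟨S, (Finset.mem_filter.1 hS).2,
    fun T hT => hmax T (Finset.mem_filter.2 ⟨Finset.mem_univ _, hT⟩)⟩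

lemma exists_maxIndepOn (L : Finset V) : ∃ S : Finset V, IsMaxIndepOn G L S := by
  classical
  obtain ⟨S, hS, hmax⟩ := Finset.exists_max_image
    (Finset.univ.filter fun S : Finset V => S ⊆ L ∧ Indep G S) Finset.card
    ⟨∅, Finset.mem_filter.2 ⟨Finset.mem_univ _, Finset.empty_subset _, by simp [Indep]⟩⟩
  obtain ⟨h1, h2⟩ := (Finset.mem_filter.1 hS).2
  exact ⟨S, h1, h2,
    fun T hT hT2 => hmax T (Finset.mem_filter.2 ⟨Finset.mem_univ _, hT, hT2⟩)⟩

end Aux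
section Aux2
set_option linter.unusedSectionVars false
variable {V : Type*} [Fintype V] [DecidableEq V] {G : SimpleGraph V} [DecidableRel G.Adj]

lemma hall_cond {I : Finset V} (hI : IsCritIndep G I) {X : Finset V}
    (hX : X ⊆ nbhd G I) : X.card ≤ (nbhd G X ∩ I).card := by
  set J := I \ nbhd G X with hJdef
  have hJind : Indep G J := hI.1.subs Finset.sdiff_subset
  have hNJ : nbhd G J ⊆ nbhd G I \ X := by
    intro y hy
    rw [mem_nbhd] at hy
    obtain ⟨j, hj, ha⟩ := hy
    rw [hJdef, Finset.mem_sdiff] at hj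
    refine Finset.mem_sdiff.2 ⟨mem_nbhd.2 ⟨j, hj.1, ha⟩, fun hyX => ?_⟩
    exact hj.2 (mem_nbhd.2 ⟨y, hyX, ha.symm⟩)
  have h1 : J.card + (I ∩ nbhd G X).card = I.card :=
    Finset.card_sdiff_add_card_inter I (nbhd G X)
  have h2 : (nbhd G J).card ≤ (nbhd G I).card - X.card := by
    have := Finset.card_le_card hNJ
    rwa [Finset.card_sdiff_of_subset hX] at this
  have hXle : X.card ≤ (nbhd G I).card := Finset.card_le_card hX
  have h3 := hI.2 J hJind
  have h4 : (nbhd G X ∩ I).card = (I ∩ nbhd G X).card := by rw [Finset.inter_comm]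
  unfold diffI at h3
  omega

lemma exists_hall_injection {I : Finset V} (hI : IsCritIndep G I) :
    ∃ f : {x // x ∈ nbhd G I} → V, Function.Injective f ∧
      ∀ x : {x // x ∈ nbhd G I}, f x ∈ G.neighborFinset x.val ∩ I := by
  classical
  rw [← Finset.all_card_le_biUnion_card_iff_exists_injective]
  intro s
  have himg : (s.image Subtype.val).card = s.card :=
    Finset.card_image_of_injective _ Subtype.val_injective
  have hsub : s.image Subtype.val ⊆ nbhd G I := by
    intro x hx
    obtain ⟨y, _, rfl⟩ := Finset.mem_image.1 hx
    exact y.2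
  have heq : s.biUnion (fun x => G.neighborFinset x.val ∩ I)
      = nbhd G (s.image Subtype.val) ∩ I := by
    ext y
    simp only [Finset.mem_biUnion, Finset.mem_inter, mem_nbhd, Finset.mem_image,
      SimpleGraph.mem_neighborFinset]
    constructor
    · rintro ⟨x, hx, ha, hy⟩
      exact ⟨⟨x.val, ⟨x, hx, rfl⟩, ha⟩, hy⟩
    · rintro ⟨⟨u, ⟨x, hx, rfl⟩, ha⟩, hy⟩
      exact ⟨x, hx, ha, hy⟩
  have := hall_cond hI hsub
  rw [heq]
  omega

end Aux2
section Aux3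
set_option linter.unusedSectionVars false
variable {V : Type*} [Fintype V] [DecidableEq V] {G : SimpleGraph V} [DecidableRel G.Adj]

lemma exists_base_matching {I : Finset V} (hI : IsCritIndep G I) :
    ∃ M0 : V → V, IsMatchingOn G (I ∪ nbhd G I) M0 ∧
      matchSize M0 = 2 * (nbhd G I).card := by
  classical
  obtain ⟨f, hfinj, hf⟩ := exists_hall_injection hI
  have hfI : ∀ x, f x ∈ I := fun x => (Finset.mem_inter.1 (hf x)).2
  have hfadj : ∀ x : {x // x ∈ nbhd G I}, G.Adj x.val (f x) := fun x => by
    have := (Finset.mem_inter.1 (hf x)).1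
    rwa [SimpleGraph.mem_neighborFinset] at this
  have hInb : ∀ v ∈ I, v ∉ nbhd G I := fun v hv => not_mem_nbhd_self hI.1 hv
  set M0 : V → V := fun v =>
    if h : v ∈ nbhd G I then f ⟨v, h⟩
    else if h2 : ∃ x : {x // x ∈ nbhd G I}, f x = v then h2.choose.val
    else v with hM0def
  have hM0nb : ∀ (v : V) (h : v ∈ nbhd G I), M0 v = f ⟨v, h⟩ := by
    intro v h; simp only [hM0def, dif_pos h]
  have hM0im : ∀ (x : {x // x ∈ nbhd G I}), M0 (f x) = x.val := by
    intro x
    have h1 : f x ∉ nbhd G I := fun h => hInb _ (hfI x) h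
    have h2 : ∃ y : {x // x ∈ nbhd G I}, f y = f x := ⟨x, rfl⟩
    simp only [hM0def, dif_neg h1, dif_pos h2]
    exact congrArg Subtype.val (hfinj h2.choose_spec)
  have hM0fix : ∀ v, v ∉ nbhd G I → (¬ ∃ x : {x // x ∈ nbhd G I}, f x = v) → M0 v = v := by
    intro v h1 h2; simp only [hM0def, dif_neg h1, dif_neg h2]
  have hinv : Function.Involutive M0 := by
    intro v
    by_cases h : v ∈ nbhd G I
    · rw [hM0nb v h, hM0im ⟨v, h⟩]
    · by_cases h2 : ∃ x : {x // x ∈ nbhd G I}, f x = v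
      · have : M0 v = h2.choose.val := by simp only [hM0def, dif_neg h, dif_pos h2]
        rw [this]
        have := hM0nb h2.choose.val h2.choose.2
        rw [this]
        have : (⟨h2.choose.val, h2.choose.2⟩ : {x // x ∈ nbhd G I}) = h2.choose := rfl
        rw [this, h2.choose_spec]
      · rw [hM0fix v h h2, hM0fix v h h2]
  have hns : ∀ v, M0 v ≠ v → v ∈ nbhd G I ∨ (∃ x : {x // x ∈ nbhd G I}, f x = v) := by
    intro v hv
    by_cases h : v ∈ nbhd G I
    · exact Or.inl h
    · by_cases h2 : ∃ x : {x // x ∈ nbhd G I}, f x = v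
      · exact Or.inr h2
      · exact absurd (hM0fix v h h2) hv
  have hadj : ∀ v, M0 v ≠ v → G.Adj v (M0 v) := by
    intro v hv
    rcases hns v hv with h | h
    · rw [hM0nb v h]; exact hfadj ⟨v, h⟩
    · obtain ⟨x, rfl⟩ := h
      rw [hM0im x]; exact (hfadj x).symm
  have hmatch : IsMatchingOn G (I ∪ nbhd G I) M0 := by
    refine ⟨⟨hinv, hadj⟩, fun v hv => ?_⟩
    rcases hns v hv with h | h
    · exact Finset.mem_union_right _ h
    · obtain ⟨x, rfl⟩ := h
      exact Finset.mem_union_left _ (hfI x)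
  refine ⟨M0, hmatch, ?_⟩
  have hsupp : (Finset.univ.filter fun v => M0 v ≠ v)
      = nbhd G I ∪ Finset.univ.image (fun x : {x // x ∈ nbhd G I} => f x) := by
    ext v
    simp only [Finset.mem_filter, Finset.mem_univ, true_and, Finset.mem_union,
      Finset.mem_image]
    constructor
    · intro hv
      rcases hns v hv with h | h
      · exact Or.inl h
      · obtain ⟨x, hx⟩ := h
        exact Or.inr ⟨x, hx⟩
    · rintro (h | ⟨x, rfl⟩)
      · rw [hM0nb v h]
        intro heq
        exact hInb _ (heq ▸ hfI ⟨v, h⟩) h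
      · rw [hM0im x]
        intro heq
        exact hInb _ (heq ▸ hfI x) (heq ▸ x.2)
  have hdisj : Disjoint (nbhd G I)
      (Finset.univ.image (fun x : {x // x ∈ nbhd G I} => f x)) := by
    rw [Finset.disjoint_right]
    intro a ha
    obtain ⟨x, _, rfl⟩ := Finset.mem_image.1 ha
    exact fun h => hInb _ (hfI x) h
  have hcardim : (Finset.univ.image (fun x : {x // x ∈ nbhd G I} => f x)).card
      = (nbhd G I).card := by
    rw [Finset.card_image_of_injective _ hfinj, Finset.card_univ, Fintype.card_coe]
  unfold matchSize
  rw [hsupp, Finset.card_union_of_disjoint hdisj, hcardim]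
  ring

end Aux3
section Aux4
set_option linter.unusedSectionVars false
variable {V : Type*} [Fintype V] [DecidableEq V] {G : SimpleGraph V} [DecidableRel G.Adj]
variable {I : Finset V} {M : V → V}

/-- Every vertex of `N(I)` is matched by a maximum matching of `G[L]`, with partner in `I`. -/
lemma maxmatching_pairs (hI : IsCritIndep G I)
    (hM : IsMaxMatchingOn G (I ∪ nbhd G I) M) :
    ∀ x ∈ nbhd G I, M x ≠ x ∧ M x ∈ I := by
  classical
  obtain ⟨M0, hM0, hM0size⟩ := exists_base_matching hI
  have hsize : 2 * (nbhd G I).card ≤ matchSize M := hM0size ▸ hM.2 M0 hM0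
  have hinv : Function.Involutive M := hM.1.1.1
  have hadj : ∀ v, M v ≠ v → G.Adj v (M v) := hM.1.1.2
  have hInb : ∀ v ∈ I, v ∉ nbhd G I := fun v hv => not_mem_nbhd_self hI.1 hv
  set P := Finset.univ.filter (fun v => M v ≠ v) with hPdef
  have hPmem : ∀ v, v ∈ P ↔ M v ≠ v := by
    intro v; simp [hPdef]
  have hPL : P ⊆ I ∪ nbhd G I := fun v hv => hM.1.2 v ((hPmem v).1 hv)
  have hMP : ∀ v ∈ P, M v ∈ P := by
    intro v hv
    rw [hPmem] at hv ⊢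
    rw [hinv v]
    exact fun h => hv h.symm
  have hMinj : Set.InjOn M ↑(P ∩ I) := by
    intro a _ b _ hab
    have := congrArg M hab
    rwa [hinv a, hinv b] at this
  have hmapsto : ∀ v ∈ P ∩ I, M v ∈ P ∩ nbhd G I := by
    intro v hv
    rw [Finset.mem_inter] at hv ⊢
    refine ⟨hMP v hv.1, ?_⟩
    exact mem_nbhd.2 ⟨v, hv.2, hadj v ((hPmem v).1 hv.1)⟩
  have hc1 : (P ∩ I).card ≤ (P ∩ nbhd G I).card :=
    Finset.card_le_card_of_injOn M hmapsto hMinj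
  have hc2 : (P ∩ nbhd G I).card ≤ (nbhd G I).card :=
    Finset.card_le_card Finset.inter_subset_right
  have hsplit : P.card = (P ∩ I).card + (P ∩ nbhd G I).card := by
    rw [← Finset.card_union_of_disjoint]
    · congr 1
      ext v
      simp only [Finset.mem_union, Finset.mem_inter]
      constructor
      · intro hv
        rcases Finset.mem_union.1 (hPL hv) with h | h
        · exact Or.inl ⟨hv, h⟩
        · exact Or.inr ⟨hv, h⟩
      · rintro (⟨h, _⟩ | ⟨h, _⟩) <;> exact h
    · rw [Finset.disjoint_left]
      intro a ha ha2
      exact hInb a (Finset.mem_inter.1 ha).2 (Finset.mem_inter.1 ha2).2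
  have hmsize : matchSize M = P.card := rfl
  have hcN : (P ∩ nbhd G I).card = (nbhd G I).card := by omega
  have hcI : (P ∩ I).card = (nbhd G I).card := by omega
  have himage : (P ∩ I).image M = P ∩ nbhd G I := by
    apply Finset.eq_of_subset_of_card_le
    · intro x hx
      obtain ⟨v, hv, rfl⟩ := Finset.mem_image.1 hx
      exact hmapsto v hv
    · rw [Finset.card_image_of_injOn hMinj]
      omega
  intro x hx
  have hxP : x ∈ P ∩ nbhd G I := by
    rw [← hcN] at *
    have : P ∩ nbhd G I = nbhd G I := by
      apply Finset.eq_of_subset_of_card_le Finset.inter_subset_right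
      omega
    rw [this]; exact hx
  obtain ⟨v, hv, hvx⟩ := Finset.mem_image.1 (himage ▸ hxP)
  have hxne : M x ≠ x := (hPmem x).1 (Finset.mem_inter.1 hxP).1
  refine ⟨hxne, ?_⟩
  have : M x = v := by rw [← hvx, hinv]
  rw [this]
  exact (Finset.mem_inter.1 hv).2

end Aux4
section Aux5
set_option linter.unusedSectionVars false
variable {V : Type*} [Fintype V] [DecidableEq V] {G : SimpleGraph V} [DecidableRel G.Adj]
variable {I : Finset V} {M : V → V}

lemma psi_facts (hI : IsCritIndep G I) (hM : IsMaxMatchingOn G (I ∪ nbhd G I) M)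
    {A : Finset V} (hA : Indep G A) (hAL : A ⊆ I ∪ nbhd G I) :
    (∀ a ∈ A, (if a ∈ I then a else M a) ∈ I) ∧
      Set.InjOn (fun a => if a ∈ I then a else M a) ↑A := by
  classical
  have hpairs := maxmatching_pairs hI hM
  have hadj : ∀ v, M v ≠ v → G.Adj v (M v) := hM.1.1.2
  have hmem : ∀ a ∈ A, (if a ∈ I then a else M a) ∈ I := by
    intro a ha
    by_cases h : a ∈ I
    · simp [h]
    · have haN : a ∈ nbhd G I := (Finset.mem_union.1 (hAL ha)).resolve_left h
      simp only [if_neg h]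
      exact (hpairs a haN).2
  refine ⟨hmem, ?_⟩
  intro a ha b hb hab
  simp only at hab
  by_cases h1 : a ∈ I <;> by_cases h2 : b ∈ I
  · rwa [if_pos h1, if_pos h2] at hab
  · rw [if_pos h1, if_neg h2] at hab
    have hbN : b ∈ nbhd G I := (Finset.mem_union.1 (hAL hb)).resolve_left h2
    have := hadj b (hpairs b hbN).1
    rw [← hab] at this
    exact absurd this.symm (hA a ha b hb)
  · rw [if_neg h1, if_pos h2] at hab
    have haN : a ∈ nbhd G I := (Finset.mem_union.1 (hAL ha)).resolve_left h1
    have := hadj a (hpairs a haN).1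
    rw [hab] at this
    exact absurd this.symm (hA b hb a ha)
  · rw [if_neg h1, if_neg h2] at hab
    have := congrArg M hab
    rwa [hM.1.1.1 a, hM.1.1.1 b] at this

lemma indep_card_le_of_subset_L (hI : IsCritIndep G I)
    (hM : IsMaxMatchingOn G (I ∪ nbhd G I) M)
    {A : Finset V} (hA : Indep G A) (hAL : A ⊆ I ∪ nbhd G I) : A.card ≤ I.card := by
  classical
  obtain ⟨hmem, hinj⟩ := psi_facts hI hM hA hAL
  exact Finset.card_le_card_of_injOn _ hmem hinj

lemma no_edge_I_compl {v w : V} (hv : v ∈ I) (hw : w ∉ I ∪ nbhd G I)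
    (h : G.Adj v w) : False := by
  exact hw (Finset.mem_union_right _ (mem_nbhd.2 ⟨v, hv, h⟩))

lemma isMaxIndep_union_of_maxOn (hI : IsCritIndep G I)
    (hM : IsMaxMatchingOn G (I ∪ nbhd G I) M)
    {T : Finset V} (hT : IsMaxIndepOn G (Finset.univ \ (I ∪ nbhd G I)) T) :
    IsMaxIndep G (I ∪ T) := by
  classical
  have hTc : ∀ t ∈ T, t ∉ I ∪ nbhd G I := by
    intro t ht
    have := hT.1 ht
    rw [Finset.mem_sdiff] at this
    exact this.2
  have hind : Indep G (I ∪ T) := by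
    intro u hu v hv hadj
    rcases Finset.mem_union.1 hu with hu | hu <;> rcases Finset.mem_union.1 hv with hv | hv
    · exact hI.1 u hu v hv hadj
    · exact no_edge_I_compl hu (hTc v hv) hadj
    · exact no_edge_I_compl hv (hTc u hu) hadj.symm
    · exact hT.2.1 u hu v hv hadj
  refine ⟨hind, fun S hS => ?_⟩
  have hdisj : Disjoint I T := by
    rw [Finset.disjoint_left]
    intro a ha hat
    exact hTc a hat (Finset.mem_union_left _ ha)
  have hcard : (I ∪ T).card = I.card + T.card := Finset.card_union_of_disjoint hdisj
  have h1 : (S ∩ (I ∪ nbhd G I)).card ≤ I.card :=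
    indep_card_le_of_subset_L hI hM (hS.subs Finset.inter_subset_left)
      Finset.inter_subset_right
  have h2 : (S \ (I ∪ nbhd G I)).card ≤ T.card := by
    apply hT.2.2
    · intro a ha
      rw [Finset.mem_sdiff] at ha ⊢
      exact ⟨Finset.mem_univ _, ha.2⟩
    · exact hS.subs Finset.sdiff_subset
  have h3 : (S ∩ (I ∪ nbhd G I)).card + (S \ (I ∪ nbhd G I)).card = S.card :=
    Finset.card_inter_add_card_sdiff S (I ∪ nbhd G I)
  omega

lemma maxind_inter_L_card (hI : IsCritIndep G I)
    (hM : IsMaxMatchingOn G (I ∪ nbhd G I) M)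
    {S : Finset V} (hS : IsMaxIndep G S) :
    (S ∩ (I ∪ nbhd G I)).card = I.card ∧
      ∀ T : Finset V, IsMaxIndepOn G (Finset.univ \ (I ∪ nbhd G I)) T →
        (S \ (I ∪ nbhd G I)).card = T.card := by
  classical
  obtain ⟨T, hT⟩ := exists_maxIndepOn (G := G) (Finset.univ \ (I ∪ nbhd G I))
  have hUT := isMaxIndep_union_of_maxOn hI hM hT
  have hdisj : Disjoint I T := by
    rw [Finset.disjoint_left]
    intro a ha hat
    have := hT.1 hat
    rw [Finset.mem_sdiff] at this
    exact this.2 (Finset.mem_union_left _ ha)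
  have hge : I.card + T.card ≤ S.card := by
    rw [← Finset.card_union_of_disjoint hdisj]
    exact hS.2 _ hUT.1
  have h1 : (S ∩ (I ∪ nbhd G I)).card ≤ I.card :=
    indep_card_le_of_subset_L hI hM (hS.1.subs Finset.inter_subset_left)
      Finset.inter_subset_right
  have h2 : (S \ (I ∪ nbhd G I)).card ≤ T.card := by
    apply hT.2.2
    · intro a ha
      rw [Finset.mem_sdiff] at ha ⊢
      exact ⟨Finset.mem_univ _, ha.2⟩
    · exact hS.1.subs Finset.sdiff_subset
  have h3 : (S ∩ (I ∪ nbhd G I)).card + (S \ (I ∪ nbhd G I)).card = S.card :=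
    Finset.card_inter_add_card_sdiff S (I ∪ nbhd G I)
  constructor
  · omega
  · intro T' hT'
    have hUT' := isMaxIndep_union_of_maxOn hI hM hT'
    have hdisj' : Disjoint I T' := by
      rw [Finset.disjoint_left]
      intro a ha hat
      have := hT'.1 hat
      rw [Finset.mem_sdiff] at this
      exact this.2 (Finset.mem_union_left _ ha)
    have hge' : I.card + T'.card ≤ S.card := by
      rw [← Finset.card_union_of_disjoint hdisj']
      exact hS.2 _ hUT'.1
    have h2' : (S \ (I ∪ nbhd G I)).card ≤ T'.card := by
      apply hT'.2.2
      · intro a ha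
        rw [Finset.mem_sdiff] at ha ⊢
        exact ⟨Finset.mem_univ _, ha.2⟩
      · exact hS.1.subs Finset.sdiff_subset
    omega

end Aux5
section Aux6
set_option linter.unusedSectionVars false
variable {V : Type*} [Fintype V] [DecidableEq V] {G : SimpleGraph V} [DecidableRel G.Adj]
variable {I : Finset V} {M : V → V}

lemma maxind_pair_structure (hI : IsCritIndep G I)
    (hM : IsMaxMatchingOn G (I ∪ nbhd G I) M)
    {S : Finset V} (hS : IsMaxIndep G S) :
    (∀ v ∈ I, M v = v → v ∈ S) ∧
      (∀ x ∈ nbhd G I, (x ∈ S ∨ M x ∈ S) ∧ ¬(x ∈ S ∧ M x ∈ S)) := by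
  classical
  have hpairs := maxmatching_pairs hI hM
  set L := I ∪ nbhd G I with hL
  set A := S ∩ L with hA
  have hAind : Indep G A := hS.1.subs Finset.inter_subset_left
  have hAL : A ⊆ L := Finset.inter_subset_right
  have hAcard : A.card = I.card := (maxind_inter_L_card hI hM hS).1
  obtain ⟨hmem, hinj⟩ := psi_facts hI hM hAind hAL
  set ψ := fun a => if a ∈ I then a else M a with hψ
  have hBeq : A.image ψ = I := by
    apply Finset.eq_of_subset_of_card_le
    · intro x hx
      obtain ⟨a, ha, rfl⟩ := Finset.mem_image.1 hx
      exact hmem a ha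
    · rw [Finset.card_image_of_injOn hinj, hAcard]
  have hIN : ∀ v ∈ I, v ∉ nbhd G I := fun v hv => not_mem_nbhd_self hI.1 hv
  constructor
  · intro v hv hMv
    have : v ∈ A.image ψ := hBeq ▸ hv
    obtain ⟨a, ha, hav⟩ := Finset.mem_image.1 this
    by_cases h : a ∈ I
    · rw [hψ] at hav; simp only [if_pos h] at hav
      subst hav
      exact (Finset.mem_inter.1 ha).1
    · rw [hψ] at hav; simp only [if_neg h] at hav
      have : a = M v := by rw [← hav, hM.1.1.1]
      rw [hMv] at this
      subst this
      exact absurd hv h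
  · intro x hx
    have hxI : x ∉ I := fun h => hIN x h hx
    have hMxI : M x ∈ I := (hpairs x hx).2
    have hMxne : M x ≠ x := (hpairs x hx).1
    constructor
    · have : M x ∈ A.image ψ := hBeq ▸ hMxI
      obtain ⟨a, ha, hav⟩ := Finset.mem_image.1 this
      by_cases h : a ∈ I
      · rw [hψ] at hav; simp only [if_pos h] at hav
        subst hav
        exact Or.inr (Finset.mem_inter.1 ha).1
      · rw [hψ] at hav; simp only [if_neg h] at hav
        have : a = x := by
          have := congrArg M hav
          rwa [hM.1.1.1 a, hM.1.1.1 x] at this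
        subst this
        exact Or.inl (Finset.mem_inter.1 ha).1
    · rintro ⟨h1, h2⟩
      exact hS.1 x h1 (M x) h2 (hM.1.1.2 x hMxne)

end Aux6
section Aux7
set_option linter.unusedSectionVars false
variable {V : Type*} [Fintype V] [DecidableEq V] {G : SimpleGraph V} [DecidableRel G.Adj]
variable {I : Finset V} {M : V → V}

/-- The intersection of a critical independent set with a maximum independent set
is critical. -/
lemma crit_inter_max {J S : Finset V} (hJ : IsCritIndep G J) (hS : IsMaxIndep G S) :
    IsCritIndep G (J ∩ S) := by
  classical
  refine ⟨hJ.1.subs Finset.inter_subset_left, ?_⟩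
  intro X hX
  have h1 : diffI G X ≤ diffI G J := hJ.2 X hX
  suffices h : diffI G J ≤ diffI G (J ∩ S) by linarith
  -- the exchanged independent set
  have hS' : Indep G ((S \ nbhd G J) ∪ J) := by
    intro u hu v hv hadj
    rcases Finset.mem_union.1 hu with hu' | hu' <;> rcases Finset.mem_union.1 hv with hv' | hv'
    · exact hS.1 u (Finset.mem_sdiff.1 hu').1 v (Finset.mem_sdiff.1 hv').1 hadj
    · exact (Finset.mem_sdiff.1 hu').2 (mem_nbhd.2 ⟨v, hv', hadj.symm⟩)
    · exact (Finset.mem_sdiff.1 hv').2 (mem_nbhd.2 ⟨u, hu', hadj⟩)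
    · exact hJ.1 u hu' v hv' hadj
  have hcard : ((S \ nbhd G J) ∪ J).card ≤ S.card := hS.2 _ hS'
  have e1 : ((S \ nbhd G J) ∪ J).card + ((S \ nbhd G J) ∩ J).card
      = (S \ nbhd G J).card + J.card := Finset.card_union_add_card_inter _ _
  have e2 : (S \ nbhd G J) ∩ J = S ∩ J := by
    ext a
    simp only [Finset.mem_inter, Finset.mem_sdiff]
    constructor
    · rintro ⟨⟨h1, _⟩, h2⟩; exact ⟨h1, h2⟩
    · rintro ⟨h1, h2⟩
      exact ⟨⟨h1, fun h => not_mem_nbhd_self hJ.1 h2 h⟩, h2⟩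
  have e3 : (S \ nbhd G J).card + (S ∩ nbhd G J).card = S.card :=
    Finset.card_sdiff_add_card_inter S (nbhd G J)
  have hstar : J.card ≤ (S ∩ nbhd G J).card + (S ∩ J).card := by
    rw [e2] at e1; omega
  have hN : nbhd G (J ∩ S) ⊆ nbhd G J \ (S ∩ nbhd G J) := by
    intro y hy
    have hyJ : y ∈ nbhd G J := nbhd_mono Finset.inter_subset_left hy
    refine Finset.mem_sdiff.2 ⟨hyJ, fun hyS => ?_⟩
    obtain ⟨j, hj, hadj⟩ := mem_nbhd.1 hy
    exact hS.1 j (Finset.mem_inter.1 hj).2 y (Finset.mem_inter.1 hyS).1 hadj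
  have c1 : (nbhd G (J ∩ S)).card ≤ (nbhd G J).card - (S ∩ nbhd G J).card := by
    have := Finset.card_le_card hN
    rwa [Finset.card_sdiff_of_subset Finset.inter_subset_right] at this
  have c2 : (S ∩ nbhd G J).card ≤ (nbhd G J).card :=
    Finset.card_le_card Finset.inter_subset_right
  have c3 : (J ∩ S).card = (S ∩ J).card := by rw [Finset.inter_comm]
  have c4 : (S ∩ J).card ≤ J.card := by
    rw [Finset.inter_comm]; exact Finset.card_le_card Finset.inter_subset_left
  unfold diffI
  omega

/-- Any vertex of `I` missed by the maximum matching `M` of `G[L]` belongs to every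
critical independent set. -/
lemma missed_mem_crit (hI : IsCritIndep G I)
    (hM : IsMaxMatchingOn G (I ∪ nbhd G I) M)
    {v : V} (hv : v ∈ I) (hvM : M v = v)
    {J : Finset V} (hJ : IsCritIndep G J) : v ∈ J := by
  classical
  by_contra hvJ
  have hpairs := maxmatching_pairs hI hM
  set X := nbhd G I \ nbhd G J with hX
  -- M injects X into (I \ J).erase v
  have hmap : ∀ x ∈ X, M x ∈ (I \ J).erase v := by
    intro x hx
    rw [hX, Finset.mem_sdiff] at hx
    obtain ⟨hxI, hxJ⟩ := hx
    have hMxI : M x ∈ I := (hpairs x hxI).2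
    have hMxne : M x ≠ x := (hpairs x hxI).1
    have hMxv : M x ≠ v := by
      intro h
      have : x = M v := by rw [← h, hM.1.1.1]
      rw [hvM] at this
      subst this
      exact not_mem_nbhd_self hI.1 hv hxI
    have hMxJ : M x ∉ J := by
      intro h
      exact hxJ (mem_nbhd.2 ⟨M x, h, (hM.1.1.2 x hMxne).symm⟩)
    exact Finset.mem_erase.2 ⟨hMxv, Finset.mem_sdiff.2 ⟨hMxI, hMxJ⟩⟩
  have hinj : Set.InjOn M ↑X := by
    intro a _ b _ hab
    have := congrArg M hab
    rwa [hM.1.1.1 a, hM.1.1.1 b] at this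
  have h1 : X.card ≤ ((I \ J).erase v).card := Finset.card_le_card_of_injOn M hmap hinj
  have hvIJ : v ∈ I \ J := Finset.mem_sdiff.2 ⟨hv, hvJ⟩
  have h2 : ((I \ J).erase v).card = (I \ J).card - 1 := Finset.card_erase_of_mem hvIJ
  have h2' : 1 ≤ (I \ J).card := Finset.card_pos.2 ⟨v, hvIJ⟩
  -- key counting
  have i1 : (I ∪ J).card + (I ∩ J).card = I.card + J.card :=
    Finset.card_union_add_card_inter I J
  have i2 : (nbhd G I ∪ nbhd G J).card + (nbhd G I ∩ nbhd G J).card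
      = (nbhd G I).card + (nbhd G J).card := Finset.card_union_add_card_inter _ _
  have i3 : diffI G (I ∪ J) ≤ diffI G I := diffI_le_crit hI (I ∪ J)
  have i35 : nbhd G (I ∪ J) = nbhd G I ∪ nbhd G J := nbhd_union
  rw [diffI, diffI, i35] at i3
  have i4 : diffI G J = diffI G I := le_antisymm (hI.2 J hJ.1) (hJ.2 I hI.1)
  rw [diffI, diffI] at i4
  have i6 : X.card + (nbhd G I ∩ nbhd G J).card = (nbhd G I).card := by
    rw [hX]
    exact Finset.card_sdiff_add_card_inter _ _
  have i7 : (I \ J).card + (I ∩ J).card = I.card := Finset.card_sdiff_add_card_inter I J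
  omega

end Aux7
theorem stmt17 (I : Finset V) (hI : IsMaxCritIndep G I) (M : V → V)
    (hM : IsMaxMatchingOn G (I ∪ nbhd G I) M) :
    core G = coreOn G (univ \ (I ∪ nbhd G I)) ∪
      M '' (↑(nbhd G I) \ corona G) ∪ kerS G := by
  classical
  have hIc : IsCritIndep G I := hI.1
  ext v
  simp only [Set.mem_union, core, coreOn, corona, kerS, Set.mem_setOf_eq, Set.mem_image,
    Set.mem_diff, Finset.mem_coe]
  constructor
  · intro hv
    obtain ⟨T, hT⟩ := exists_maxIndepOn (G := G) (Finset.univ \ (I ∪ nbhd G I))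
    have hUT := isMaxIndep_union_of_maxOn hIc hM hT
    have hvUT : v ∈ I ∪ T := hv _ hUT
    rcases Finset.mem_union.1 hvUT with hvI | hvT
    · by_cases hMv : M v = v
      · exact Or.inr (fun J hJ => missed_mem_crit hIc hM hvI hMv hJ)
      · left; right
        have hxN : M v ∈ nbhd G I := mem_nbhd.2 ⟨v, hvI, hM.1.1.2 v hMv⟩
        refine ⟨M v, ⟨hxN, ?_⟩, hM.1.1.1 v⟩
        rintro ⟨S₀, hS₀, hxS₀⟩
        have hps := (maxind_pair_structure hIc hM hS₀).2 (M v) hxN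
        have hMMv : M (M v) = v := hM.1.1.1 v
        have hvin : M (M v) ∈ S₀ := by rw [hMMv]; exact hv _ hS₀
        exact hps.2 ⟨hxS₀, hvin⟩
    · left; left
      intro S' hS'
      have hUS' := isMaxIndep_union_of_maxOn hIc hM hS'
      have hvmem : v ∈ I ∪ S' := hv _ hUS'
      rcases Finset.mem_union.1 hvmem with h | h
      · exfalso
        have := hT.1 hvT
        rw [Finset.mem_sdiff] at this
        exact this.2 (Finset.mem_union_left _ h)
      · exact h
  · rintro ((hco | him) | hker) S hS
    · -- coreOn case
      obtain ⟨T, hT⟩ := exists_maxIndepOn (G := G) (Finset.univ \ (I ∪ nbhd G I))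
      have hSd : IsMaxIndepOn G (Finset.univ \ (I ∪ nbhd G I)) (S \ (I ∪ nbhd G I)) := by
        refine ⟨?_, hS.1.subs Finset.sdiff_subset, ?_⟩
        · intro a ha
          rw [Finset.mem_sdiff] at ha ⊢
          exact ⟨Finset.mem_univ _, ha.2⟩
        · intro T' hT'sub hT'ind
          have h1 := hT.2.2 T' hT'sub hT'ind
          have h2 := (maxind_inter_L_card hIc hM hS).2 T hT
          omega
      have := hco _ hSd
      exact (Finset.mem_sdiff.1 this).1
    · obtain ⟨x, hx, rfl⟩ := him
      have hps := (maxind_pair_structure hIc hM hS).2 x hx.1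
      rcases hps.1 with h | h
      · exact absurd ⟨S, hS, h⟩ hx.2
      · exact h
    · have hcrit := crit_inter_max (J := I) hIc hS
      exact Finset.inter_subset_right (hker _ hcrit)
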